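/- Let k ≥ 1 be an integer and n = 8k+2, let a, b, c be the generators of the Weierstrass group W_n, and set A = a·b·c = [[1, −8k−4], [0, 1]]. Then the element γ = c·A^{4k−1}·a·b·a·b·a·A^{−(k−1)}·c·a of W_{8k+2} satisfies |tr γ| > 2, and both (2, 8k+1) and (−8k−2, 4k+3) are eigenvectors of γ. Hence γ is a hyperbolic element of W_{8k+2} whose fixed points on the boundary are the rational numbers 2/(8k+1) and (−8k−2)/(4k+3), i.e. a special element of W_{8k+2}. -/

import Mathlib

noncomputable section

open Matrix

abbrev SL2R := Matrix.SpecialLinearGroup (Fin 2) ℝ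

/-- Generator `a` of the Weierstrass groups. -/
def Wa : SL2R := ⟨!![1, 2; -1, -1], by norm_num [Matrix.det_fin_two_of]⟩

/-- Generator `b = √n · [[1,1],[-(n+1)/n,-1]]` of the `n`-th Weierstrass group. -/
def Wb (n : ℕ) (hn : 0 < n) : SL2R :=
  ⟨Real.sqrt n • !![1, 1; -((n : ℝ) + 1) / n, -1], by
    have h0 : (0:ℝ) ≤ n := Nat.cast_nonneg n
    have hne : (n : ℝ) ≠ 0 := Nat.cast_ne_zero.mpr hn.ne'
    have h : Real.sqrt n ^ 2 = n := Real.sq_sqrt h0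
    rw [Matrix.det_smul]
    simp only [Matrix.det_fin_two_of, Fintype.card_fin]
    field_simp
    rw [h]; ring⟩

/-- Generator `c = (1/√n) · [[0,n],[-1,0]]` of the `n`-th Weierstrass group. -/
def Wc (n : ℕ) (hn : 0 < n) : SL2R :=
  ⟨(1 / Real.sqrt n) • !![0, (n : ℝ); -1, 0], by
    have h0 : (0:ℝ) ≤ n := Nat.cast_nonneg n
    have hne : (n : ℝ) ≠ 0 := Nat.cast_ne_zero.mpr hn.ne'
    have h : Real.sqrt n ^ 2 = n := Real.sq_sqrt h0
    have hs : Real.sqrt n ≠ 0 := by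
      intro hs; rw [hs] at h; simp at h; exact hne h.symm
    rw [Matrix.det_smul]
    simp only [Matrix.det_fin_two_of, Fintype.card_fin]
    field_simp
    rw [h]; ring⟩

/-- The `n`-th Weierstrass group. -/
def W (n : ℕ) (hn : 0 < n) : Subgroup SL2R :=
  Subgroup.closure {Wa, Wb n hn, Wc n hn}

/-- `γ` fixes the boundary point `x ∈ ℝ`: `(x,1)` is an eigenvector of `γ`. -/
def FixesBoundary (γ : SL2R) (x : ℝ) : Prop :=
  ∃ t : ℝ, t ≠ 0 ∧ (γ : Matrix (Fin 2) (Fin 2) ℝ).mulVec ![x, 1] = t • ![x, 1]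

/-- `γ` fixes the boundary point `∞`: `(1,0)` is an eigenvector of `γ`. -/
def FixesInfty (γ : SL2R) : Prop :=
  ∃ t : ℝ, t ≠ 0 ∧ (γ : Matrix (Fin 2) (Fin 2) ℝ).mulVec ![1, 0] = t • ![1, 0]

/-- `γ ∈ SL(2,ℝ)` is parabolic: `γ ≠ ±1` and `|tr γ| = 2`. -/
def IsParabolic (γ : SL2R) : Prop :=
  γ ≠ 1 ∧ γ ≠ -1 ∧ |Matrix.trace (γ : Matrix (Fin 2) (Fin 2) ℝ)| = 2

/-- `γ ∈ SL(2,ℝ)` is hyperbolic: `|tr γ| > 2`. -/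
def IsHyperbolic (γ : SL2R) : Prop :=
  2 < |Matrix.trace (γ : Matrix (Fin 2) (Fin 2) ℝ)|



/-- The element `γ = c·A^{4k−1}·a·b·a·b·a·A^{−(k−1)}·c·a` of the Weierstrass group
`W_{8k+2}`, where `A = a·b·c`. -/
def specialW8k2 (k : ℕ) (hk : 1 ≤ k) : SL2R :=
  Wc (8 * k + 2) (by omega) *
    (Wa * Wb (8 * k + 2) (by omega) * Wc (8 * k + 2) (by omega)) ^ (4 * k - 1) *
    Wa * Wb (8 * k + 2) (by omega) * Wa * Wb (8 * k + 2) (by omega) * Wa *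
    (Wa * Wb (8 * k + 2) (by omega) * Wc (8 * k + 2) (by omega)) ^ (-((k : ℤ) - 1)) *
    Wc (8 * k + 2) (by omega) * Wa

/-- Unipotent shear matrix in `SL2R`. -/
def Ush (x : ℝ) : SL2R := ⟨!![1, x; 0, 1], by norm_num [Matrix.det_fin_two_of]⟩

lemma Ush_mul (x y : ℝ) : Ush x * Ush y = Ush (x + y) := by
  ext i j
  rw [Matrix.SpecialLinearGroup.coe_mul]
  simp [Ush, Matrix.SpecialLinearGroup.coe_mul]
  fin_cases i <;> fin_cases j <;> simp [Matrix.mul_apply, Fin.sum_univ_two] <;> ring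

lemma Ush_zero : Ush 0 = 1 := by
  ext i j
  fin_cases i <;> fin_cases j <;> simp [Ush]

lemma Ush_pow (x : ℝ) (m : ℕ) : Ush x ^ m = Ush (m * x) := by
  induction m with
  | zero => simp [Ush_zero]
  | succ m ih => rw [pow_succ, ih, Ush_mul]; push_cast; ring_nf

lemma Ush_inv (x : ℝ) : (Ush x)⁻¹ = Ush (-x) := by
  apply inv_eq_of_mul_eq_one_right
  rw [Ush_mul]; simp [Ush_zero]

lemma Ush_zpow (x : ℝ) (z : ℤ) : Ush x ^ z = Ush (z * x) := by
  cases z with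
  | ofNat m => rw [Int.ofNat_eq_coe, zpow_natCast, Ush_pow]; norm_num
  | negSucc m =>
    rw [zpow_negSucc, Ush_pow, Ush_inv]
    congr 1; push_cast; ring

lemma weier_A_eq (k : ℕ) (hk : 1 ≤ k) :
    Wa * Wb (8 * k + 2) (by omega) * Wc (8 * k + 2) (by omega) = Ush (-8 * (k:ℝ) - 4) := by
  have hn : ((8 * k + 2 : ℕ) : ℝ) = 8 * (k:ℝ) + 2 := by push_cast; ring
  have h0 : (0:ℝ) ≤ 8 * (k:ℝ) + 2 := by positivity
  set s : ℝ := Real.sqrt (8 * (k:ℝ) + 2) with hs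
  have hs2 : s ^ 2 = 8 * (k:ℝ) + 2 := Real.sq_sqrt h0
  have hspos : 0 < s := Real.sqrt_pos.mpr (by positivity)
  have hsne : s ≠ 0 := hspos.ne'
  have hnne : (8:ℝ) * k + 2 ≠ 0 := by positivity
  ext i j
  rw [Matrix.SpecialLinearGroup.coe_mul, Matrix.SpecialLinearGroup.coe_mul]
  simp only [Wa, Wb, Wc, Ush, Matrix.SpecialLinearGroup.coe_mul,
    Matrix.SpecialLinearGroup.coe_mk, hn, ← hs]
  fin_cases i <;> fin_cases j <;>
    simp [Matrix.mul_apply, Fin.sum_univ_two] <;>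
    field_simp <;> nlinarith [hs2, sq_nonneg s]

set_option maxHeartbeats 1600000 in
lemma coe_specialW8k2 (k : ℕ) (hk : 1 ≤ k) :
    ((specialW8k2 k hk : SL2R) : Matrix (Fin 2) (Fin 2) ℝ) =
      !![(8*(k:ℝ)^2+8*k+1)/(4*k+1), (16*(k:ℝ)^2+8*k)/(4*k+1);
         (2*(k:ℝ)*(2*k+1)*(8*k+1)*(4*k+3))/(4*k+1)^2,
         (256*(k:ℝ)^4+224*(k:ℝ)^3+56*(k:ℝ)^2+4*k+1)/(4*k+1)^2] := by
  have hn : ((8 * k + 2 : ℕ) : ℝ) = 8 * (k:ℝ) + 2 := by push_cast; ring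
  have h0 : (0:ℝ) ≤ 8 * (k:ℝ) + 2 := by positivity
  have hk1 : (1:ℝ) ≤ (k:ℝ) := by exact_mod_cast hk
  have hcast : ((4 * k - 1 : ℕ) : ℝ) = 4 * (k:ℝ) - 1 := by
    push_cast [Nat.cast_sub (by omega : 1 ≤ 4 * k)]; ring
  rw [specialW8k2, weier_A_eq k hk, Ush_pow, Ush_zpow]
  set s : ℝ := Real.sqrt (8 * (k:ℝ) + 2) with hs
  have hs2 : s ^ 2 = 8 * (k:ℝ) + 2 := Real.sq_sqrt h0
  have hspos : 0 < s := Real.sqrt_pos.mpr (by positivity)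
  have hsne : s ≠ 0 := hspos.ne'
  have hnne : (8:ℝ) * k + 2 ≠ 0 := by positivity
  have hm : (4:ℝ) * k + 1 ≠ 0 := by positivity
  simp only [Matrix.SpecialLinearGroup.coe_mul]
  simp only [Wa, Wb, Wc, Ush, Matrix.SpecialLinearGroup.coe_mul,
    Matrix.SpecialLinearGroup.coe_mk, hn, ← hs, hcast]
  simp only [smul_mul_assoc, mul_smul_comm, smul_smul]
  rw [show (1 / s * (s * (s * (1 / s)))) = 1 by field_simp, one_smul]
  have hx2 : ((-((k:ℤ) - 1) : ℤ) : ℝ) = -((k:ℝ) - 1) := by push_cast; ring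
  rw [hx2]
  ext i j
  fin_cases i <;> fin_cases j <;>
    · simp [Matrix.mul_apply, Fin.sum_univ_two]
      field_simp
      ring



/-- For `k ≥ 1` and `n = 8k+2`: `A = a·b·c = [[1, −8k−4], [0, 1]]`, and
`γ = c·A^{4k−1}·a·b·a·b·a·A^{−(k−1)}·c·a` satisfies `|tr γ| > 2` and has
eigenvectors `(2, 8k+1)` and `(−8k−2, 4k+3)`; hence `γ` is a special (hyperbolic)
element of `W_{8k+2}` fixing the rationals `2/(8k+1)` and `(−8k−2)/(4k+3)`. -/
theorem weierstrass_8k2_special (k : ℕ) (hk : 1 ≤ k) :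
    (Wa * Wb (8 * k + 2) (by omega) * Wc (8 * k + 2) (by omega) =
      (⟨!![1, -8 * (k : ℝ) - 4; 0, 1], by norm_num [Matrix.det_fin_two_of]⟩ : SL2R)) ∧
    2 < |Matrix.trace ((specialW8k2 k hk : SL2R) : Matrix (Fin 2) (Fin 2) ℝ)| ∧
    (∃ t : ℝ, t ≠ 0 ∧
      ((specialW8k2 k hk : SL2R) : Matrix (Fin 2) (Fin 2) ℝ).mulVec
          ![2, 8 * (k : ℝ) + 1] = t • ![2, 8 * (k : ℝ) + 1]) ∧
    (∃ t : ℝ, t ≠ 0 ∧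
      ((specialW8k2 k hk : SL2R) : Matrix (Fin 2) (Fin 2) ℝ).mulVec
          ![-8 * (k : ℝ) - 2, 4 * (k : ℝ) + 3] = t • ![-8 * (k : ℝ) - 2, 4 * (k : ℝ) + 3]) ∧
    IsHyperbolic (specialW8k2 k hk) ∧
    FixesBoundary (specialW8k2 k hk) (2 / (8 * (k : ℝ) + 1)) ∧
    FixesBoundary (specialW8k2 k hk) ((-8 * (k : ℝ) - 2) / (4 * (k : ℝ) + 3)) ∧
    specialW8k2 k hk ∈ W (8 * k + 2) (by omega) := by
  have hk1 : (1:ℝ) ≤ (k:ℝ) := by exact_mod_cast hk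
  have hm : (0:ℝ) < 4 * (k:ℝ) + 1 := by positivity
  have hM := coe_specialW8k2 k hk
  have hA' : Wa * Wb (8 * k + 2) (by omega) * Wc (8 * k + 2) (by omega) =
      (⟨!![1, -8 * (k : ℝ) - 4; 0, 1], by norm_num [Matrix.det_fin_two_of]⟩ : SL2R) := by
    rw [weier_A_eq k hk]; rfl
  have htr : 2 < |Matrix.trace ((specialW8k2 k hk : SL2R) : Matrix (Fin 2) (Fin 2) ℝ)| := by
    rw [hM, Matrix.trace_fin_two]
    simp only [Matrix.cons_val', Matrix.cons_val_zero, Matrix.cons_val_one, Matrix.head_cons,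
      Matrix.empty_val', Matrix.cons_val_fin_one, Matrix.head_fin_const, Matrix.of_apply]
    rw [abs_of_pos (by positivity)]
    rw [div_add_div _ _ (by positivity) (by positivity), lt_div_iff₀ (by positivity)]
    nlinarith [hk1, sq_nonneg ((k:ℝ) - 1), pow_pos (by positivity : (0:ℝ) < (k:ℝ)) 3,
      pow_pos (by positivity : (0:ℝ) < (k:ℝ)) 4]
  have hev1 : ((specialW8k2 k hk : SL2R) : Matrix (Fin 2) (Fin 2) ℝ).mulVec
      ![2, 8 * (k : ℝ) + 1] = ((4*(k:ℝ)+1)^2) • ![2, 8 * (k : ℝ) + 1] := by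
    rw [hM]
    ext i
    fin_cases i <;>
      · simp [Matrix.mulVec, dotProduct, Fin.sum_univ_two]
        field_simp
        ring
  have hev2 : ((specialW8k2 k hk : SL2R) : Matrix (Fin 2) (Fin 2) ℝ).mulVec
      ![-8 * (k : ℝ) - 2, 4 * (k : ℝ) + 3] =
      (1/(4*(k:ℝ)+1)^2) • ![-8 * (k : ℝ) - 2, 4 * (k : ℝ) + 3] := by
    rw [hM]
    ext i
    fin_cases i <;>
      · simp [Matrix.mulVec, dotProduct, Fin.sum_univ_two]
        field_simp
        ring
  have hd1 : (8:ℝ) * k + 1 ≠ 0 := by positivity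
  have hd2 : (4:ℝ) * k + 3 ≠ 0 := by positivity
  have hfix1 : FixesBoundary (specialW8k2 k hk) (2 / (8 * (k : ℝ) + 1)) := by
    refine ⟨(4*(k:ℝ)+1)^2, by positivity, ?_⟩
    have : (![2 / (8 * (k:ℝ) + 1), 1] : Fin 2 → ℝ) =
        (1 / (8 * (k:ℝ) + 1)) • ![2, 8 * (k:ℝ) + 1] := by
      ext i; fin_cases i <;> · simp; field_simp
    rw [this, Matrix.mulVec_smul, hev1, smul_comm]
  have hfix2 : FixesBoundary (specialW8k2 k hk) ((-8 * (k : ℝ) - 2) / (4 * (k : ℝ) + 3)) := by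
    refine ⟨1/(4*(k:ℝ)+1)^2, by positivity, ?_⟩
    have : (![(-8 * (k:ℝ) - 2) / (4 * (k:ℝ) + 3), 1] : Fin 2 → ℝ) =
        (1 / (4 * (k:ℝ) + 3)) • ![-8 * (k:ℝ) - 2, 4 * (k:ℝ) + 3] := by
      ext i; fin_cases i <;> · simp; field_simp
    rw [this, Matrix.mulVec_smul, hev2, smul_comm]
  have hmem : specialW8k2 k hk ∈ W (8 * k + 2) (by omega) := by
    have ha : Wa ∈ W (8 * k + 2) (by omega) :=
      Subgroup.subset_closure (by simp)
    have hb : Wb (8 * k + 2) (by omega) ∈ W (8 * k + 2) (by omega) :=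
      Subgroup.subset_closure (by simp)
    have hc : Wc (8 * k + 2) (by omega) ∈ W (8 * k + 2) (by omega) :=
      Subgroup.subset_closure (by simp)
    exact mul_mem (mul_mem (mul_mem (mul_mem (mul_mem (mul_mem (mul_mem (mul_mem
      (mul_mem hc (pow_mem (mul_mem (mul_mem ha hb) hc) _)) ha) hb) ha) hb) ha)
      (zpow_mem (mul_mem (mul_mem ha hb) hc) _)) hc) ha
  exact ⟨hA', htr, ⟨_, by positivity, hev1⟩, ⟨_, by positivity, hev2⟩, htr, hfix1, hfix2, hmem⟩
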